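/- Let G be a digraph of order n with minimum in-degree at least 1, and let t = |{u : d⁻(u) = 1}|. If t = 0 then G has a directed cycle of length at most ⌈n/2⌉, and if t ≥ 1 then G has a directed cycle of length at most ⌈(n + t − 1)/2⌉. -/

import Mathlib

/-- A directed cycle of length `m` in the digraph with arc relation `A`. -/
def IsCycleOn {V : Type*} (A : V → V → Prop) (m : ℕ) (c : ZMod m → V) : Prop :=
  2 ≤ m ∧ Function.Injective c ∧ ∀ i, A (c i) (c (i + 1))

open Finset Function
open scoped Classical

universe u

/-- in-neighborhood as a Finset -/
noncomputable def inN {V : Type u} [Fintype V] (A : V → V → Prop) (v : V) : Finset V :=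
  Finset.univ.filter fun u => A u v

noncomputable def degA {V : Type u} [Fintype V] (A : V → V → Prop) (v : V) : ℕ :=
  (inN A v).card

noncomputable def D1 {V : Type u} [Fintype V] (A : V → V → Prop) : Finset V :=
  Finset.univ.filter fun v => degA A v = 1

noncomputable def tA {V : Type u} [Fintype V] (A : V → V → Prop) : ℕ := (D1 A).card

lemma mem_inN {V : Type u} [Fintype V] {A : V → V → Prop} {u v : V} :
    u ∈ inN A v ↔ A u v := by simp [inN]

lemma mem_D1 {V : Type u} [Fintype V] {A : V → V → Prop} {v : V} :
    v ∈ D1 A ↔ degA A v = 1 := by simp [D1]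

lemma cycle_of_fn {S : Type*} [Fintype S] [Nonempty S] {W : Type*} (A : W → W → Prop)
    (f : S → S) (g : S → W) (hg : Function.Injective g)
    (harc : ∀ s, A (g s) (g (f s))) (hne : ∀ s, f s ≠ s) :
    ∃ m c, IsCycleOn A m c ∧ m ≤ Fintype.card S := by
  obtain ⟨x₀⟩ := ‹Nonempty S›
  obtain ⟨a, b, hab, hfab⟩ :
      ∃ a b : Fin (Fintype.card S + 1), a ≠ b ∧ f^[(a : ℕ)] x₀ = f^[(b : ℕ)] x₀ := by
    apply Fintype.exists_ne_map_eq_of_card_lt (fun k : Fin (Fintype.card S + 1) => f^[(k : ℕ)] x₀)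
    simp
  obtain ⟨i, j, hij, hfij⟩ : ∃ i j : ℕ, i < j ∧ f^[i] x₀ = f^[j] x₀ := by
    rcases lt_or_gt_of_ne hab with h | h
    · exact ⟨a, b, Fin.lt_iff_val_lt_val.mp h, hfab⟩
    · exact ⟨b, a, Fin.lt_iff_val_lt_val.mp h, hfab.symm⟩
  set x := f^[i] x₀ with hx
  have hper : Function.IsPeriodicPt f (j - i) x := by
    show f^[j - i] x = x
    rw [hx, ← Function.iterate_add_apply, Nat.sub_add_cancel hij.le]
    exact hfij.symm
  set m := Function.minimalPeriod f x with hm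
  have hm0 : 0 < m := hper.minimalPeriod_pos (by omega)
  have hmx : f^[m] x = x := Function.iterate_minimalPeriod
  have hm2 : 2 ≤ m := by
    by_contra h
    push_neg at h
    have hm1 : m = 1 := by omega
    rw [hm1, Function.iterate_one] at hmx
    exact hne x hmx
  have hinjit : ∀ k l : ℕ, k < m → l < m → f^[k] x = f^[l] x → k = l := by
    intro k l hk hl hkl
    exact Function.iterate_injOn_Iio_minimalPeriod (Set.mem_Iio.2 hk) (Set.mem_Iio.2 hl) hkl
  have hmcard : m ≤ Fintype.card S := by
    have : Function.Injective (fun k : Fin m => f^[(k : ℕ)] x) := by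
      intro k l hkl
      exact Fin.ext (hinjit _ _ k.2 l.2 hkl)
    simpa using Fintype.card_le_of_injective _ this
  haveI : NeZero m := ⟨by omega⟩
  refine ⟨m, fun k => g (f^[(ZMod.val k)] x), ⟨hm2, ?_, ?_⟩, hmcard⟩
  · intro k l hkl
    have h1 : f^[(ZMod.val k)] x = f^[(ZMod.val l)] x := hg hkl
    have := hinjit _ _ (ZMod.val_lt k) (ZMod.val_lt l) h1
    exact ZMod.val_injective m this
  · intro k
    have hval : (ZMod.val (k + 1)) = ((ZMod.val k) + 1) % m := by
      rw [ZMod.val_add, ZMod.val_one_eq_one_mod, Nat.mod_eq_of_lt (by omega : 1 < m)]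
    have h2 : f^[((ZMod.val k) + 1) % m] x = f (f^[(ZMod.val k)] x) := by
      have h3 := Function.iterate_mod_minimalPeriod_eq (f := f) (x := x) (n := (ZMod.val k) + 1)
      rw [← hm] at h3
      rw [h3, Function.iterate_succ_apply']
    show A (g (f^[(ZMod.val k)] x)) (g (f^[(ZMod.val (k + 1))] x))
    rw [hval, h2]
    exact harc _

lemma main (n : ℕ) : ∀ (V : Type u) [Fintype V] [Nonempty V] (A : V → V → Prop),
    Fintype.card V = n → (∀ v, ¬ A v v) → (∀ v, 1 ≤ degA A v) → (∀ v, degA A v ≤ 2) →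
    ∃ m c, IsCycleOn A m c ∧ 2 * m ≤ n + max (tA A) 1 := by
  induction n using Nat.strong_induction_on with
  | _ n IH =>
  intro V _ _ A hcard hloop hd1 hd2
  by_contra hcon
  push_neg at hcon
  have hsecond : ∀ v : V, ∃ u, A u v ∧ u ≠ v := by
    intro v
    have h1 : 0 < (inN A v).card := hd1 v
    obtain ⟨u, hu⟩ := Finset.card_pos.mp h1
    rw [mem_inN] at hu
    exact ⟨u, hu, fun h => hloop v (h ▸ hu)⟩
  have hn1 : 1 ≤ n := hcard ▸ Fintype.card_pos
  have hn2 : 2 ≤ n := by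
    obtain ⟨v⟩ := ‹Nonempty V›
    obtain ⟨u, _, hne⟩ := hsecond v
    rw [← hcard]
    exact Fintype.one_lt_card_iff_nontrivial.mpr ⟨⟨u, v, hne⟩⟩
  set e2 : V → ℕ := fun v => (Finset.univ.filter fun y => A v y ∧ degA A y = 2).card with he2
  set Good : V → Prop := fun v => ∀ y, inN A y ≠ {v} with hGood
  -- key per-vertex estimate, via deletion of a good vertex
  have key : ∀ v : V, Good v →
      max (tA A) 1 + 2 + (if v ∈ D1 A then 1 else 0) ≤ e2 v + tA A := by
    intro v hgood
    obtain ⟨w₀, hw₀A, hw₀⟩ := hsecond v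
    set A' : {x : V // x ≠ v} → {x : V // x ≠ v} → Prop := fun a b => A a.1 b.1 with hA'
    haveI : Nonempty {x : V // x ≠ v} := ⟨⟨w₀, hw₀⟩⟩
    have hcard' : Fintype.card {x : V // x ≠ v} = n - 1 := by
      rw [← hcard]
      rw [Fintype.card_subtype_compl (p := fun x => x = v), Fintype.card_subtype_eq]
    have hgood2 : ∀ y : V, A v y → 2 ≤ degA A y := by
      intro y hvy
      have h1 := hd1 y
      by_contra h
      push_neg at h
      have hone : (inN A y).card = 1 := by
        have : degA A y = 1 := by omega
        exact this
      obtain ⟨a, ha⟩ := Finset.card_eq_one.mp hone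
      have hva : v ∈ inN A y := mem_inN.mpr hvy
      rw [ha] at hva
      have hav := Finset.mem_singleton.mp hva
      exact hgood y (by rw [ha, ← hav])
    have hdel : ∀ y : {x : V // x ≠ v},
        degA A' y + (if A v y.1 then 1 else 0) = degA A y.1 := by
      intro y
      have hbij : degA A' y = ((inN A y.1).erase v).card := by
        apply Finset.card_bij (fun (u : {x : V // x ≠ v}) _ => u.1)
        · intro a ha
          rw [mem_inN] at ha
          exact Finset.mem_erase.mpr ⟨a.2, mem_inN.mpr ha⟩
        · intro a _ b _ h
          exact Subtype.ext h
        · intro b hb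
          obtain ⟨hbne, hbin⟩ := Finset.mem_erase.mp hb
          have h0 : A b y.1 := mem_inN.mp hbin
          refine ⟨⟨b, hbne⟩, ?_, rfl⟩
          simp only [mem_inN, hA']
          exact h0
      by_cases hvy : A v y.1
      · have hvmem : v ∈ inN A y.1 := mem_inN.mpr hvy
        rw [hbij, Finset.card_erase_of_mem hvmem, if_pos hvy]
        have h2 := hgood2 y.1 hvy
        have : degA A y.1 = (inN A y.1).card := rfl
        omega
      · rw [hbij, Finset.erase_eq_of_notMem (fun h => hvy (mem_inN.mp h)), if_neg hvy,
          Nat.add_zero]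
        rfl
    have hloop' : ∀ a : {x : V // x ≠ v}, ¬ A' a a := fun a => hloop a.1
    have hd1' : ∀ y, 1 ≤ degA A' y := by
      intro y
      have h := hdel y
      by_cases hvy : A v y.1
      · have := hgood2 y.1 hvy
        rw [if_pos hvy] at h
        omega
      · have := hd1 y.1
        rw [if_neg hvy] at h
        omega
    have hd2' : ∀ y, degA A' y ≤ 2 := by
      intro y
      have h := hdel y
      have := hd2 y.1
      omega
    -- relate tA A' with e2 v and D1
    have hdegiff : ∀ y : {x : V // x ≠ v},
        degA A' y = 1 ↔ ((A v y.1 ∧ degA A y.1 = 2) ∨ (¬ A v y.1 ∧ degA A y.1 = 1)) := by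
      intro y
      have h := hdel y
      by_cases hvy : A v y.1
      · rw [if_pos hvy] at h
        simp only [hvy, true_and, not_true_eq_false, false_and, or_false]
        omega
      · rw [if_neg hvy] at h
        simp only [hvy, false_and, not_false_eq_true, true_and, false_or]
        omega
    have ht' : tA A' = e2 v + ((D1 A).erase v).card := by
      have hTcard : tA A' = (Finset.univ.filter fun y : V =>
          ((A v y ∧ degA A y = 2) ∨ (¬ A v y ∧ degA A y = 1 ∧ y ≠ v))).card := by
        apply Finset.card_bij (fun (u : {x : V // x ≠ v}) _ => u.1)
        · intro a ha
          have h2 := (hdegiff a).mp (mem_D1.mp ha)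
          rw [Finset.mem_filter]
          refine ⟨Finset.mem_univ _, ?_⟩
          rcases h2 with h2 | h2
          · exact Or.inl h2
          · exact Or.inr ⟨h2.1, h2.2, a.2⟩
        · intro a _ b _ h
          exact Subtype.ext h
        · intro b hb
          rw [Finset.mem_filter] at hb
          have hbne : b ≠ v := by
            rcases hb.2 with h2 | h2
            · intro hbv; rw [hbv] at h2; exact hloop v h2.1
            · exact h2.2.2
          refine ⟨⟨b, hbne⟩, ?_, rfl⟩
          refine mem_D1.mpr ((hdegiff ⟨b, hbne⟩).mpr ?_)
          rcases hb.2 with h2 | h2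
          · exact Or.inl h2
          · exact Or.inr ⟨h2.1, h2.2.1⟩
      rw [hTcard]
      have hsplit : (Finset.univ.filter fun y : V =>
          ((A v y ∧ degA A y = 2) ∨ (¬ A v y ∧ degA A y = 1 ∧ y ≠ v))) =
          (Finset.univ.filter fun y => A v y ∧ degA A y = 2) ∪ ((D1 A).erase v) := by
        ext y
        simp only [Finset.mem_filter, Finset.mem_union, Finset.mem_erase, D1,
          Finset.mem_univ, true_and]
        constructor
        · rintro (h | h)
          · exact Or.inl h
          · exact Or.inr ⟨h.2.2, h.2.1⟩
        · rintro (h | h)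
          · exact Or.inl h
          · have hnvy : ¬ A v y := by
              intro hvy
              have := hgood2 y hvy
              omega
            exact Or.inr ⟨hnvy, h.2, h.1⟩
      rw [hsplit, Finset.card_union_of_disjoint]
      rw [Finset.disjoint_left]
      intro y hy hy2
      rw [Finset.mem_filter] at hy
      rw [Finset.mem_erase] at hy2
      have hy3 := mem_D1.mp hy2.2
      omega
    have hersplit : ((D1 A).erase v).card + (if v ∈ D1 A then 1 else 0) = tA A := by
      by_cases hv : v ∈ D1 A
      · rw [if_pos hv]
        exact Finset.card_erase_add_one hv
      · rw [if_neg hv, Finset.erase_eq_of_notMem hv, Nat.add_zero]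
        rfl
    obtain ⟨m', c', hcyc', hle'⟩ := IH (n - 1) (by omega) {x : V // x ≠ v} A'
      hcard' hloop' hd1' hd2'
    have hliftcyc : IsCycleOn A m' (fun k => (c' k).1) :=
      ⟨hcyc'.1, fun a b h => hcyc'.2.1 (Subtype.ext h), fun i => hcyc'.2.2 i⟩
    have hconk := hcon m' _ hliftcyc
    have hbig : max (tA A) 1 + 2 ≤ max (tA A') 1 := by omega
    split_ifs at hersplit ⊢ <;> omega
  -- double counting of arcs into degree-2 vertices
  have hsum : ∑ v : V, e2 v = 2 * (Finset.univ.filter fun y => degA A y = 2).card := by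
    have h1 : ∀ v : V, e2 v = ∑ y : V, (if A v y ∧ degA A y = 2 then 1 else 0) := by
      intro v
      rw [he2]
      exact Finset.card_filter _ _
    rw [Finset.sum_congr rfl (fun v _ => h1 v), Finset.sum_comm]
    have h2 : ∀ y : V, (∑ v : V, if A v y ∧ degA A y = 2 then 1 else 0)
        = if degA A y = 2 then 2 else 0 := by
      intro y
      by_cases hy : degA A y = 2
      · rw [if_pos hy]
        have h3 : (∑ v : V, if A v y then 1 else 0) = degA A y := by
          rw [degA, inN]
          exact (Finset.card_filter _ _).symm
        have h4 : (∑ v : V, if A v y ∧ degA A y = 2 then 1 else 0)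
            = ∑ v : V, if A v y then 1 else 0 := by
          apply Finset.sum_congr rfl
          intro v _
          by_cases hv : A v y
          · rw [if_pos hv, if_pos ⟨hv, hy⟩]
          · rw [if_neg hv, if_neg (fun h => hv h.1)]
        omega
      · rw [if_neg hy]
        apply Finset.sum_eq_zero
        intro v _
        rw [if_neg (fun h => hy h.2)]
    calc (∑ y : V, ∑ x : V, if A x y ∧ degA A y = 2 then 1 else 0)
        = ∑ y : V, (if degA A y = 2 then 2 else 0) :=
          Finset.sum_congr rfl (fun y _ => h2 y)
      _ = ∑ _y ∈ Finset.univ.filter (fun y => degA A y = 2), 2 :=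
          (Finset.sum_filter _ _).symm
      _ = 2 * (Finset.univ.filter fun y => degA A y = 2).card := by
          rw [Finset.sum_const, smul_eq_mul, mul_comm]
  have hpart : tA A + (Finset.univ.filter fun y => degA A y = 2).card = n := by
    have hiff : ∀ y ∈ Finset.univ, (¬ degA A y = 1) ↔ degA A y = 2 := by
      intro y _
      have := hd1 y; have := hd2 y
      omega
    have hpn := Finset.card_filter_add_card_filter_not
      (s := (Finset.univ : Finset V)) (p := fun y => degA A y = 1)
    rw [Finset.filter_congr hiff] at hpn
    rw [tA, D1]
    rw [Finset.card_univ, hcard] at hpn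
    exact hpn
  rcases Nat.eq_zero_or_pos (tA A) with ht0 | ht1
  -- case t = 0
  · have hD1empty : D1 A = ∅ := Finset.card_eq_zero.mp ht0
    have hallgood : ∀ v : V, Good v := by
      intro v y hy
      have hy1 : y ∈ D1 A := by
        rw [mem_D1, degA, hy]
        simp
      rw [hD1empty] at hy1
      simp at hy1
    have h3 : ∀ v : V, 3 ≤ e2 v := by
      intro v
      have hk := key v (hallgood v)
      rw [hD1empty] at hk
      simp only [Finset.notMem_empty, if_false] at hk
      omega
    have hsum3 : 3 * n ≤ ∑ v : V, e2 v := by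
      calc 3 * n = ∑ _v : V, 3 := by
            rw [Finset.sum_const, Finset.card_univ, hcard, smul_eq_mul, mul_comm]
        _ ≤ ∑ v : V, e2 v := Finset.sum_le_sum (fun v _ => h3 v)
    rw [hsum] at hsum3
    omega
  -- case t ≥ 1
  · set GoodS := Finset.univ.filter Good with hGoodS
    have hbadcard : (Finset.univ.filter fun v => ¬ Good v).card ≤ tA A := by
      apply Finset.card_le_card_of_injOn
        (fun v => if h : ∃ y, inN A y = {v} then h.choose else v)
      · intro v hv
        simp only [Finset.coe_filter, Set.mem_setOf_eq] at hv
        have hex : ∃ y, inN A y = {v} := by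
          by_contra hne
          push_neg at hne
          exact hv.2 (fun y => hne y)
        simp only [Finset.mem_coe]
        rw [dif_pos hex]
        have hspec := hex.choose_spec
        rw [mem_D1, degA, hspec]
        simp
      · intro a ha b hb hab
        have hab' : (if h : ∃ y, inN A y = {a} then h.choose else a)
            = (if h : ∃ y, inN A y = {b} then h.choose else b) := hab
        simp only [Finset.coe_filter, Set.mem_setOf_eq] at ha hb
        have hexa : ∃ y, inN A y = {a} := by
          by_contra hne; push_neg at hne; exact ha.2 (fun y => hne y)
        have hexb : ∃ y, inN A y = {b} := by
          by_contra hne; push_neg at hne; exact hb.2 (fun y => hne y)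
        rw [dif_pos hexa, dif_pos hexb] at hab'
        have h1 := hexa.choose_spec
        have h2 := hexb.choose_spec
        rw [hab', h2] at h1
        exact (Finset.singleton_injective h1.symm)
    have hgoodcard : n ≤ GoodS.card + tA A := by
      have hpn := Finset.card_filter_add_card_filter_not
        (s := (Finset.univ : Finset V)) (p := Good)
      rw [Finset.card_univ, hcard, ← hGoodS] at hpn
      omega
    have hptwise : ∀ v ∈ GoodS, 2 + (if v ∈ D1 A then 1 else 0) ≤ e2 v := by
      intro v hv
      have hk := key v ((Finset.mem_filter.mp hv).2)
      have hmax : max (tA A) 1 = tA A := Nat.max_eq_left ht1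
      split_ifs at hk ⊢ <;> omega
    have hsumGood : 2 * GoodS.card + (GoodS ∩ D1 A).card ≤ ∑ v ∈ GoodS, e2 v := by
      have hsplitsum : ∑ v ∈ GoodS, (2 + if v ∈ D1 A then 1 else 0)
          = 2 * GoodS.card + (GoodS ∩ D1 A).card := by
        have hind : (∑ v ∈ GoodS, if v ∈ D1 A then 1 else 0) = (GoodS ∩ D1 A).card := by
          rw [← Finset.filter_mem_eq_inter]
          exact (Finset.card_filter _ _).symm
        rw [Finset.sum_add_distrib, Finset.sum_const, smul_eq_mul, hind]
        omega
      rw [← hsplitsum]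
      exact Finset.sum_le_sum hptwise
    have hsub : ∑ v ∈ GoodS, e2 v ≤ ∑ v : V, e2 v :=
      Finset.sum_le_sum_of_subset (Finset.subset_univ _)
    have hinter : (GoodS ∩ D1 A).card = 0 := by omega
    have hbadD1 : ∀ v, v ∈ D1 A → ∃ y, inN A y = {v} := by
      intro v hv
      by_contra hne
      push_neg at hne
      have hvGood : Good v := fun y => hne y
      have hmem : v ∈ GoodS ∩ D1 A :=
        Finset.mem_inter.mpr ⟨Finset.mem_filter.mpr ⟨Finset.mem_univ _, hvGood⟩, hv⟩
      rw [Finset.card_eq_zero.mp hinter] at hmem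
      simp at hmem
    haveI : Nonempty {v // v ∈ D1 A} := by
      obtain ⟨v, hv⟩ := Finset.card_pos.mp ht1
      exact ⟨⟨v, hv⟩⟩
    have hfdef : ∀ v : {v // v ∈ D1 A}, (hbadD1 v.1 v.2).choose ∈ D1 A := by
      intro v
      have hspec := (hbadD1 v.1 v.2).choose_spec
      rw [mem_D1, degA, hspec]
      simp
    set f : {v // v ∈ D1 A} → {v // v ∈ D1 A} :=
      fun v => ⟨(hbadD1 v.1 v.2).choose, hfdef v⟩ with hf
    have harc : ∀ s, A s.1 (f s).1 := by
      intro s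
      have hspec := (hbadD1 s.1 s.2).choose_spec
      have : s.1 ∈ inN A (f s).1 := by
        show s.1 ∈ inN A (hbadD1 s.1 s.2).choose
        rw [hspec]
        exact Finset.mem_singleton_self _
      exact mem_inN.mp this
    have hnef : ∀ s, f s ≠ s := by
      intro s hfs
      have hspec := (hbadD1 s.1 s.2).choose_spec
      have hv : (hbadD1 s.1 s.2).choose = s.1 := congrArg Subtype.val hfs
      rw [hv] at hspec
      have : s.1 ∈ inN A s.1 := by
        rw [hspec]; exact Finset.mem_singleton_self _
      exact hloop s.1 (mem_inN.mp this)
    obtain ⟨m, c, hcyc, hmle⟩ := cycle_of_fn A f (fun s => s.1) Subtype.val_injective harc hnef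
    have hcards : Fintype.card {v // v ∈ D1 A} = tA A := Fintype.card_coe _
    have htn : tA A ≤ n := by
      rw [← hcard, ← Finset.card_univ]
      exact Finset.card_le_card (Finset.subset_univ _)
    have := hcon m c hcyc
    omega

lemma degA_natcard {V : Type u} [Fintype V] (A : V → V → Prop) (v : V) :
    Nat.card {u : V // A u v} = degA A v := by
  rw [Nat.card_eq_fintype_card, degA, inN, Fintype.card_subtype]

lemma tA_natcard {V : Type u} [Fintype V] (A : V → V → Prop) :
    Nat.card {u : V // Nat.card {w : V // A w u} = 1} = tA A := by
  rw [Nat.card_eq_fintype_card, tA, D1, Fintype.card_subtype]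
  congr 1
  exact Finset.filter_congr (fun u _ => by rw [degA_natcard])


/-- The in-degree version of Shen's theorem (obtained by reversing all arcs):
in a loopless digraph of order `n` with minimum in-degree at least `1`, if
`t = |{u : d⁻(u) = 1}|` then there is a directed cycle of length at most `⌈n/2⌉`
when `t = 0`, and of length at most `⌈(n + t - 1)/2⌉` when `t ≥ 1`. -/
theorem stmt_7 {V : Type*} [Fintype V] [Nonempty V] (A : V → V → Prop)
    (hloop : ∀ v, ¬ A v v)
    (hdeg : ∀ v : V, 1 ≤ Nat.card {u : V // A u v})
    (t : ℕ) (ht : t = Nat.card {u : V // Nat.card {w : V // A w u} = 1}) :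
    (t = 0 → ∃ (m : ℕ) (c : ZMod m → V), IsCycleOn A m c ∧
        m ≤ (Fintype.card V + 1) / 2) ∧
    (1 ≤ t → ∃ (m : ℕ) (c : ZMod m → V), IsCycleOn A m c ∧
        m ≤ ((Fintype.card V + t - 1) + 1) / 2) := by
  set n := Fintype.card V with hn
  have hdegA : ∀ v, 1 ≤ degA A v := by
    intro v
    have h := hdeg v
    rwa [degA_natcard] at h
  have hSex : ∀ v : V, ∃ s : Finset V, s ⊆ inN A v ∧ s.card = min (degA A v) 2 :=
    fun v => Finset.exists_subset_card_eq (Nat.min_le_left _ _)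
  set B : V → V → Prop := fun u v => u ∈ (hSex v).choose with hB
  have hSsub : ∀ v, (hSex v).choose ⊆ inN A v := fun v => (hSex v).choose_spec.1
  have hScard : ∀ v, ((hSex v).choose).card = min (degA A v) 2 :=
    fun v => (hSex v).choose_spec.2
  have hinNB : ∀ v, inN B v = (hSex v).choose := by
    intro v
    ext u
    rw [mem_inN]
  have hdegB : ∀ v, degA B v = min (degA A v) 2 := by
    intro v
    rw [degA, hinNB, hScard]
  have hBd1 : ∀ v, 1 ≤ degA B v := by
    intro v
    have := hdegA v
    rw [hdegB]
    omega
  have hBd2 : ∀ v, degA B v ≤ 2 := by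
    intro v
    rw [hdegB]
    omega
  have hBloop : ∀ v, ¬ B v v := fun v h => hloop v (mem_inN.mp (hSsub v h))
  have htB : tA B = tA A := by
    rw [tA, tA]
    congr 1
    ext v
    rw [mem_D1, mem_D1, hdegB]
    have := hdegA v
    constructor <;> (intro h; omega)
  obtain ⟨m, c, hcyc, hle⟩ := main n V B hn.symm hBloop hBd1 hBd2
  have hcycA : IsCycleOn A m c :=
    ⟨hcyc.1, hcyc.2.1, fun i => mem_inN.mp (hSsub _ (hcyc.2.2 i))⟩
  rw [htB] at hle
  have htt : t = tA A := by rw [ht, tA_natcard]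
  constructor
  · intro h0
    refine ⟨m, c, hcycA, ?_⟩
    have hmax : max (tA A) 1 = 1 := by omega
    rw [hmax] at hle
    exact (Nat.le_div_iff_mul_le two_pos).mpr (by omega)
  · intro h1
    refine ⟨m, c, hcycA, ?_⟩
    have hmax : max (tA A) 1 = tA A := by omega
    rw [hmax] at hle
    have h2 : (n + t - 1) + 1 = n + t := by omega
    rw [h2]
    exact (Nat.le_div_iff_mul_le two_pos).mpr (by omega)
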